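/- arXiv:math/0106166 — 3 statements merged into one kernel-verified Lean document; each statement's English description precedes it below -/
import Mathlib

section
/- The margin of a unit-normal separating hyperplane (w, b) for finite nonempty sets P and N, defined as min over x ∈ P ∪ N of |⟨w,x⟩ + b|, is at most half the minimum distance between P and N: margin ≤ (1/2) · min_{p∈P, q∈N} ‖p - q‖. -/
open InnerProductSpace

theorem stmt_5 (n : ℕ) [DecidableEq (EuclideanSpace ℝ (Fin n))] (P N : Finset (EuclideanSpace ℝ (Fin n)))
    (hP : P.Nonempty) (hN : N.Nonempty)
    (w : EuclideanSpace ℝ (Fin n)) (b : ℝ) (hw : ‖w‖ = 1)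
    (h1 : ∀ x ∈ P, ⟪w, x⟫_ℝ + b > 0) (h2 : ∀ x ∈ N, ⟪w, x⟫_ℝ + b < 0) :
    ((P ∪ N).image (fun x => |⟪w, x⟫_ℝ + b|)).min'
        ((hP.mono Finset.subset_union_left).image _) ≤
      (1 / 2) * ((P ×ˢ N).image (fun pq => ‖pq.1 - pq.2‖)).min'
        ((hP.product hN).image _) := by
  obtain ⟨pq, hpq, hval⟩ := Finset.mem_image.mp (Finset.min'_mem ((P ×ˢ N).image (fun pq => ‖pq.1 - pq.2‖)) ((hP.product hN).image _))
  obtain ⟨hp, hq⟩ := Finset.mem_product.mp hpq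
  set p := pq.1
  set q := pq.2
  have hm1 : ((P ∪ N).image (fun x => |⟪w, x⟫_ℝ + b|)).min'
      ((hP.mono Finset.subset_union_left).image _) ≤ |⟪w, p⟫_ℝ + b| :=
    Finset.min'_le _ _ (Finset.mem_image_of_mem _ (Finset.mem_union_left _ hp))
  have hm2 : ((P ∪ N).image (fun x => |⟪w, x⟫_ℝ + b|)).min'
      ((hP.mono Finset.subset_union_left).image _) ≤ |⟪w, q⟫_ℝ + b| :=
    Finset.min'_le _ _ (Finset.mem_image_of_mem _ (Finset.mem_union_right _ hq))
  rw [← hval]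
  rw [abs_of_pos (h1 p hp)] at hm1
  rw [abs_of_neg (h2 q hq)] at hm2
  have hcs : ⟪w, p - q⟫_ℝ ≤ ‖p - q‖ := by
    calc ⟪w, p - q⟫_ℝ ≤ ‖w‖ * ‖p - q‖ := real_inner_le_norm w (p - q)
      _ = ‖p - q‖ := by rw [hw, one_mul]
  have hsub : ⟪w, p - q⟫_ℝ = (⟪w, p⟫_ℝ + b) - (⟪w, q⟫_ℝ + b) := by
    rw [inner_sub_right]; ring
  linarith
end

section
/- Let P and N be finite nonempty sets in ℝⁿ that are strictly separable. Then the infimum of ‖w‖² over all (w, b) satisfying ⟨w,x⟩ + b ≥ 1 on P and ⟨w,x⟩ + b ≤ -1 on N is attained. -/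
open InnerProductSpace

set_option maxHeartbeats 1000000

theorem stmt_10 (n : ℕ) (P N : Set (EuclideanSpace ℝ (Fin n)))
    (hP : P.Finite) (hN : N.Finite) (hPne : P.Nonempty) (hNne : N.Nonempty)
    (hsep : ∃ (w : EuclideanSpace ℝ (Fin n)) (b : ℝ), w ≠ 0 ∧
      (∀ x ∈ P, ⟪w, x⟫_ℝ + b > 0) ∧ (∀ x ∈ N, ⟪w, x⟫_ℝ + b < 0)) :
    ∃ (w : EuclideanSpace ℝ (Fin n)) (b : ℝ),
      ((∀ x ∈ P, ⟪w, x⟫_ℝ + b ≥ 1) ∧ (∀ x ∈ N, ⟪w, x⟫_ℝ + b ≤ -1)) ∧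
      ∀ (w' : EuclideanSpace ℝ (Fin n)) (b' : ℝ),
        ((∀ x ∈ P, ⟪w', x⟫_ℝ + b' ≥ 1) ∧ (∀ x ∈ N, ⟪w', x⟫_ℝ + b' ≤ -1)) →
        ‖w‖ ^ 2 ≤ ‖w'‖ ^ 2 := by
  classical
  obtain ⟨w₁, b₁, _, hP1, hN1⟩ := hsep
  obtain ⟨x₀, hx₀⟩ := hPne
  obtain ⟨y₀, hy₀⟩ := hNne
  set sP := hP.toFinset.image (fun x => ⟪w₁, x⟫_ℝ + b₁) with hsP
  have hsPne : sP.Nonempty := ⟨_, Finset.mem_image_of_mem _ (hP.mem_toFinset.mpr hx₀)⟩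
  set sN := hN.toFinset.image (fun x => -(⟪w₁, x⟫_ℝ + b₁)) with hsN
  have hsNne : sN.Nonempty := ⟨_, Finset.mem_image_of_mem _ (hN.mem_toFinset.mpr hy₀)⟩
  set m : ℝ := min (sP.min' hsPne) (sN.min' hsNne) with hm
  have hmpos : 0 < m := by
    apply lt_min
    · obtain ⟨x, hx, hxe⟩ := Finset.mem_image.mp (sP.min'_mem hsPne)
      rw [← hxe]; exact hP1 x (hP.mem_toFinset.mp hx)
    · obtain ⟨x, hx, hxe⟩ := Finset.mem_image.mp (sN.min'_mem hsNne)
      rw [← hxe]; have := hN1 x (hN.mem_toFinset.mp hx); linarith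
  set w₀ : EuclideanSpace ℝ (Fin n) := m⁻¹ • w₁ with hw₀
  set b₀ : ℝ := m⁻¹ * b₁ with hb₀
  have hval : ∀ x : EuclideanSpace ℝ (Fin n), ⟪w₀, x⟫_ℝ + b₀ = (⟪w₁, x⟫_ℝ + b₁) / m := by
    intro x
    rw [hw₀, hb₀, real_inner_smul_left, div_eq_inv_mul, mul_add]
  have hfeas0P : ∀ x ∈ P, ⟪w₀, x⟫_ℝ + b₀ ≥ 1 := by
    intro x hx
    have h1 : m ≤ ⟪w₁, x⟫_ℝ + b₁ :=
      le_trans (min_le_left _ _)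
        (sP.min'_le _ (Finset.mem_image_of_mem _ (hP.mem_toFinset.mpr hx)))
    rw [hval x, ge_iff_le, le_div_iff₀ hmpos, one_mul]
    exact h1
  have hfeas0N : ∀ x ∈ N, ⟪w₀, x⟫_ℝ + b₀ ≤ -1 := by
    intro x hx
    have h1 : m ≤ -(⟪w₁, x⟫_ℝ + b₁) :=
      le_trans (min_le_right _ _)
        (sN.min'_le _ (Finset.mem_image_of_mem _ (hN.mem_toFinset.mpr hx)))
    rw [hval x, div_le_iff₀ hmpos]
    linarith
  -- The compact candidate set
  set A : Set (EuclideanSpace ℝ (Fin n) × ℝ) := {p | ∀ x ∈ P, 1 ≤ ⟪p.1, x⟫_ℝ + p.2} with hA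
  set B : Set (EuclideanSpace ℝ (Fin n) × ℝ) := {p | ∀ x ∈ N, ⟪p.1, x⟫_ℝ + p.2 ≤ -1} with hB
  set C : Set (EuclideanSpace ℝ (Fin n) × ℝ) := {p | ‖p.1‖ ≤ ‖w₀‖} with hC
  set K : Set (EuclideanSpace ℝ (Fin n) × ℝ) := A ∩ (B ∩ C) with hK
  have hK0 : (w₀, b₀) ∈ K := ⟨fun x hx => hfeas0P x hx, fun x hx => hfeas0N x hx, le_refl ‖w₀‖⟩
  have hcont : ∀ x : EuclideanSpace ℝ (Fin n), Continuous (fun p : EuclideanSpace ℝ (Fin n) × ℝ => ⟪p.1, x⟫_ℝ + p.2) :=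
    fun x => (continuous_fst.inner continuous_const).add continuous_snd
  have hKclosed : IsClosed K := by
    have hAc : IsClosed A := by
      have : A = ⋂ x ∈ P, {p : EuclideanSpace ℝ (Fin n) × ℝ | 1 ≤ ⟪p.1, x⟫_ℝ + p.2} := by
        ext p; simp [hA]
      rw [this]
      exact isClosed_biInter fun x _ => isClosed_le continuous_const (hcont x)
    have hBc : IsClosed B := by
      have : B = ⋂ x ∈ N, {p : EuclideanSpace ℝ (Fin n) × ℝ | ⟪p.1, x⟫_ℝ + p.2 ≤ -1} := by
        ext p; simp [hB]
      rw [this]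
      exact isClosed_biInter fun x _ => isClosed_le (hcont x) continuous_const
    have hCc : IsClosed C := isClosed_le continuous_fst.norm continuous_const
    exact hAc.inter (hBc.inter hCc)
  have hKbdd : Bornology.IsBounded K := by
    have hsub : K ⊆ (Metric.closedBall (0 : EuclideanSpace ℝ (Fin n)) ‖w₀‖) ×ˢ
        (Set.Icc (1 - ‖w₀‖ * ‖x₀‖) (-1 + ‖w₀‖ * ‖y₀‖)) := by
      rintro p ⟨hpA, hpB, hpC⟩
      have hCm : ‖p.1‖ ≤ ‖w₀‖ := hpC
      constructor
      · simpa using hCm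
      · have hix : |⟪p.1, x₀⟫_ℝ| ≤ ‖p.1‖ * ‖x₀‖ := abs_real_inner_le_norm _ _
        have hiy : |⟪p.1, y₀⟫_ℝ| ≤ ‖p.1‖ * ‖y₀‖ := abs_real_inner_le_norm _ _
        have hx0 : (0:ℝ) ≤ ‖x₀‖ := norm_nonneg _
        have hy0 : (0:ℝ) ≤ ‖y₀‖ := norm_nonneg _
        have hbx : ‖p.1‖ * ‖x₀‖ ≤ ‖w₀‖ * ‖x₀‖ := mul_le_mul_of_nonneg_right hCm hx0
        have hby : ‖p.1‖ * ‖y₀‖ ≤ ‖w₀‖ * ‖y₀‖ := mul_le_mul_of_nonneg_right hCm hy0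
        have h1 := hpA x₀ hx₀
        have h2 := hpB y₀ hy₀
        have hax := abs_le.mp hix
        have hay := abs_le.mp hiy
        constructor <;> [skip; skip] <;> linarith
    exact (Bornology.IsBounded.prod Metric.isBounded_closedBall (Metric.isBounded_Icc _ _)).subset hsub
  have hKcpt : IsCompact K := Metric.isCompact_of_isClosed_isBounded hKclosed hKbdd
  obtain ⟨p, hpK, hpmin⟩ := hKcpt.exists_isMinOn ⟨_, hK0⟩
    ((continuous_fst.norm.pow 2).continuousOn :
      ContinuousOn (fun p : EuclideanSpace ℝ (Fin n) × ℝ => ‖p.1‖ ^ 2) K)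
  obtain ⟨hpA, hpB, hpC⟩ := hpK
  refine ⟨p.1, p.2, ⟨fun x hx => hpA x hx, fun x hx => hpB x hx⟩, ?_⟩
  rintro w' b' ⟨hw'P, hw'N⟩
  by_cases hcase : ‖w'‖ ≤ ‖w₀‖
  · have hmem : (w', b') ∈ K := by
      simp only [hK, hA, hB, hC, Set.mem_inter_iff, Set.mem_setOf_eq]
      exact ⟨fun x hx => hw'P x hx, fun x hx => hw'N x hx, hcase⟩
    simpa using hpmin hmem
  · have h1 : ‖p.1‖ ^ 2 ≤ ‖w₀‖ ^ 2 := by simpa using hpmin hK0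
    have h2 : ‖w₀‖ ^ 2 ≤ ‖w'‖ ^ 2 :=
      pow_le_pow_left₀ (norm_nonneg _) (le_of_not_ge hcase) 2
    linarith
end

section
/- For the hard-margin SVM: if (w*, b*) minimizes ‖w‖² subject to yᵢ(⟨w, xᵢ⟩ + b) ≥ 1 for data points (xᵢ, yᵢ) with yᵢ ∈ {1, -1}, then there exists an index i with yᵢ = 1 and an index j with yⱼ = -1 such that yᵢ(⟨w*, xᵢ⟩ + b*) = 1 and yⱼ(⟨w*, xⱼ⟩ + b*) = 1, provided both labels occur. -/
open InnerProductSpace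

theorem stmt_11 (n : ℕ) (ι : Type*) [Finite ι]
    (x : ι → EuclideanSpace ℝ (Fin n)) (y : ι → ℝ)
    (hy : ∀ i, y i = 1 ∨ y i = -1)
    (hpos : ∃ i, y i = 1) (hneg : ∃ j, y j = -1)
    (w : EuclideanSpace ℝ (Fin n)) (b : ℝ)
    (hfeas : ∀ i, y i * (⟪w, x i⟫_ℝ + b) ≥ 1)
    (hmin : ∀ (w' : EuclideanSpace ℝ (Fin n)) (b' : ℝ),
      (∀ i, y i * (⟪w', x i⟫_ℝ + b') ≥ 1) → ‖w‖ ^ 2 ≤ ‖w'‖ ^ 2) :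
    ∃ i j, y i = 1 ∧ y j = -1 ∧
      y i * (⟪w, x i⟫_ℝ + b) = 1 ∧ y j * (⟪w, x j⟫_ℝ + b) = 1 := by
  haveI := Fintype.ofFinite ι
  classical
  obtain ⟨i0, hi0⟩ := hpos
  obtain ⟨j0, hj0⟩ := hneg
  set P : Finset ι := Finset.univ.filter (fun i => y i = 1) with hP
  set N : Finset ι := Finset.univ.filter (fun j => y j = -1) with hN
  have hPne : P.Nonempty := ⟨i0, by simp [hP, hi0]⟩
  have hNne : N.Nonempty := ⟨j0, by simp [hN, hj0]⟩
  set a : ℝ := P.inf' hPne (fun i => ⟪w, x i⟫_ℝ + b) with ha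
  set c : ℝ := N.inf' hNne (fun j => -(⟪w, x j⟫_ℝ + b)) with hc
  have hmemP : ∀ i ∈ P, y i = 1 := fun i hi => (Finset.mem_filter.mp hi).2
  have hmemN : ∀ j ∈ N, y j = -1 := fun j hj => (Finset.mem_filter.mp hj).2
  have ha1 : 1 ≤ a := by
    apply Finset.le_inf'
    intro i hi
    have := hfeas i
    rw [hmemP i hi] at this
    linarith
  have hc1 : 1 ≤ c := by
    apply Finset.le_inf'
    intro j hj
    have := hfeas j
    rw [hmemN j hj] at this
    linarith
  -- w ≠ 0
  have hw0 : w ≠ 0 := by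
    intro h
    have h1 := hfeas i0
    have h2 := hfeas j0
    rw [hi0] at h1
    rw [hj0] at h2
    simp [h, inner_zero_left] at h1 h2
    linarith
  have hwpos : (0:ℝ) < ‖w‖ := norm_pos_iff.mpr hw0
  -- key: a + c ≤ 2
  have hkey : a + c ≤ 2 := by
    by_contra hgt
    push_neg at hgt
    set t : ℝ := 2 / (a + c) with ht
    have hac : (0:ℝ) < a + c := by linarith
    have ht0 : 0 < t := by positivity
    have ht1 : t < 1 := by
      rw [ht, div_lt_one hac]; linarith
    have hfeas' : ∀ i, y i * (⟪t • w, x i⟫_ℝ + t * (b + (c - a)/2)) ≥ 1 := by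
      intro i
      rw [real_inner_smul_left]
      rcases hy i with h1 | h1
      · have hiP : i ∈ P := Finset.mem_filter.mpr ⟨Finset.mem_univ i, h1⟩
        have hle : a ≤ ⟪w, x i⟫_ℝ + b := Finset.inf'_le _ hiP
        rw [h1, one_mul]
        have : t * (a + (c - a)/2) = 1 := by
          rw [ht]; field_simp; ring
        nlinarith
      · have hiN : i ∈ N := Finset.mem_filter.mpr ⟨Finset.mem_univ i, h1⟩
        have hle : c ≤ -(⟪w, x i⟫_ℝ + b) := Finset.inf'_le _ hiN
        rw [h1]
        have : t * (c - (c - a)/2) = 1 := by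
          rw [ht]; field_simp; ring
        nlinarith
    have hm := hmin (t • w) (t * (b + (c - a)/2)) hfeas'
    rw [norm_smul, Real.norm_eq_abs, abs_of_pos ht0, mul_pow] at hm
    have ht2 : t ^ 2 < 1 := by nlinarith
    nlinarith [pow_pos hwpos 2]
  have haeq : a = 1 := by linarith
  have hceq : c = 1 := by linarith
  obtain ⟨i, hiP, hia⟩ := Finset.exists_mem_eq_inf' hPne (fun i => ⟪w, x i⟫_ℝ + b)
  obtain ⟨j, hjN, hjc⟩ := Finset.exists_mem_eq_inf' hNne (fun j => -(⟪w, x j⟫_ℝ + b))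
  refine ⟨i, j, hmemP i hiP, hmemN j hjN, ?_, ?_⟩
  · rw [hmemP i hiP, one_mul, ← hia, ← ha, haeq]
  · rw [hmemN j hjN]
    have : -(⟪w, x j⟫_ℝ + b) = c := hjc.symm
    rw [hceq] at this
    linarith
end
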